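/- Let a_0, a_1, …, a_n be a sequence of nonnegative real numbers such that the polynomial Σ_{k=0}^n a_k x^k has only real zeros. Then for every 1 ≤ k ≤ n−1, a_k^2 ≥ a_{k-1}·a_{k+1}·(1 + 1/k)·(1 + 1/(n−k)); in particular the sequence is log-concave and unimodal. -/

import Mathlib

open Polynomial Finset

lemma newton_aux_card_roots : ∀ (m : ℕ) (P : Polynomial ℝ), P.natDegree = m → P ≠ 0 →
    (∀ z : ℂ, Polynomial.aeval z P = 0 → z.im = 0) → Multiset.card P.roots = P.natDegree := by
  intro m
  induction m using Nat.strong_induction_on with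
  | _ m ih =>
    intro P hdeg hP h
    rcases Nat.eq_zero_or_pos m with hm | hm
    · refine le_antisymm (P.card_roots'.trans (by simp [hdeg, hm])) (by simp [hdeg, hm])
    · have hmapne : P.map (algebraMap ℝ ℂ) ≠ 0 := by
        simpa using (Polynomial.map_ne_zero_iff (algebraMap ℝ ℂ).injective).mpr hP
      have hdegpos : 0 < (P.map (algebraMap ℝ ℂ)).degree := by
        rw [degree_map_eq_of_injective (algebraMap ℝ ℂ).injective]
        exact natDegree_pos_iff_degree_pos.mp (hdeg ▸ hm)
      obtain ⟨z, hz⟩ := Complex.exists_root hdegpos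
      have hz' : Polynomial.aeval z P = 0 := by
        rwa [aeval_def, ← eval_map]
      have him := h z hz'
      have hzre : z = ((z.re : ℝ) : ℂ) := by
        apply Complex.ext <;> simp [him]
      have hroot : P.IsRoot z.re := by
        have : Polynomial.aeval ((z.re : ℝ) : ℂ) P = 0 := hzre ▸ hz'
        rw [show ((z.re : ℝ) : ℂ) = algebraMap ℝ ℂ z.re from rfl,
          aeval_algebraMap_apply] at this
        simpa [aeval_def] using (map_eq_zero_iff _ (algebraMap ℝ ℂ).injective).mp (by simpa using this)
      obtain ⟨Q, hQ⟩ := (dvd_iff_isRoot.mpr hroot)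
      have hQne : Q ≠ 0 := by rintro rfl; simp at hQ; exact hP hQ
      have hXne : (X - C z.re : Polynomial ℝ) ≠ 0 := X_sub_C_ne_zero _
      have hdQ : Q.natDegree = m - 1 := by
        have := natDegree_mul hXne hQne
        rw [← hQ, hdeg, natDegree_X_sub_C] at this
        omega
      have hQh : ∀ w : ℂ, Polynomial.aeval w Q = 0 → w.im = 0 := by
        intro w hw
        apply h w
        rw [hQ, map_mul, hw, mul_zero]
      have hQcard := ih (m - 1) (by omega) Q hdQ hQne hQh
      have : P.roots = (X - C z.re).roots + Q.roots := by
        rw [hQ]; exact roots_mul (hQ ▸ hP)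
      rw [this, hdeg]
      simp [Multiset.card_add, roots_X_sub_C, hQcard, hdQ]
      omega

lemma newton_aux_deriv (P : Polynomial ℝ) (hd : 1 ≤ P.natDegree)
    (h : Multiset.card P.roots = P.natDegree) :
    (derivative P).natDegree = P.natDegree - 1 ∧
    Multiset.card (derivative P).roots = P.natDegree - 1 ∧ derivative P ≠ 0 := by
  have hdeg := degree_derivative_eq P (by omega)
  have hne : derivative P ≠ 0 := by
    intro h0; rw [h0, degree_zero] at hdeg; exact (by simp at hdeg)
  have hnat : (derivative P).natDegree = P.natDegree - 1 :=
    natDegree_eq_of_degree_eq_some hdeg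
  have h1 : Multiset.card (derivative P).roots ≤ P.natDegree - 1 :=
    hnat ▸ (derivative P).card_roots'
  have h2 := P.card_roots_le_derivative
  refine ⟨hnat, by omega, hne⟩

lemma newton_aux_iter (P : Polynomial ℝ) (hP : P ≠ 0)
    (h : Multiset.card P.roots = P.natDegree) :
    ∀ j, j ≤ P.natDegree →
      (derivative^[j] P).natDegree = P.natDegree - j ∧
      Multiset.card (derivative^[j] P).roots = P.natDegree - j ∧ derivative^[j] P ≠ 0 := by
  intro j
  induction j with
  | zero => intro _; exact ⟨by simp, by simpa using h, by simpa using hP⟩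
  | succ j ihj =>
    intro hj
    obtain ⟨h1, h2, h3⟩ := ihj (by omega)
    have := newton_aux_deriv (derivative^[j] P) (by omega) (by rw [h1]; exact h2)
    rw [Function.iterate_succ_apply']
    refine ⟨by rw [this.1, h1]; omega, by rw [this.2.1, h1]; omega, this.2.2⟩

lemma newton_df1 (n : ℕ) : (n+1).descFactorial n = Nat.factorial (n+1) := by
  have h := Nat.descFactorial_self (n+1)
  rwa [Nat.descFactorial_succ, Nat.add_sub_cancel_left, one_mul] at h

lemma newton_df2 (n : ℕ) : 2 * ((n+2).descFactorial n) = Nat.factorial (n+2) := by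
  have h := Nat.descFactorial_self (n+2)
  rw [Nat.descFactorial_succ, Nat.descFactorial_succ] at h
  have h1 : n + 2 - (n+1) = 1 := by omega
  have h2 : n + 2 - n = 2 := by omega
  rw [h1, h2, one_mul] at h
  omega

lemma newton_aux_rev_lin (r : ℝ) (hr : r ≠ 0) :
    (X - C r).reverse = C (-r) * (X - C r⁻¹) := by
  rw [reverse, natDegree_X_sub_C]
  rw [show (X : Polynomial ℝ) - C r = C 1 * X ^ 1 - C r * X ^ 0 by simp]
  rw [reflect_sub, reflect_C_mul_X_pow, reflect_C_mul_X_pow]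
  simp [revAt]
  rw [mul_sub, ← C_mul, mul_inv_cancel₀ hr]
  ring_nf
  norm_num [Function.Embedding.coeFn_mk]
  ring

lemma newton_aux_rev_prod (s : Multiset ℝ) :
    ((s.map fun r => (X : Polynomial ℝ) - C r).prod).reverse
      = (s.map fun r => ((X : Polynomial ℝ) - C r).reverse).prod := by
  induction s using Multiset.induction with
  | empty => simpa using reverse_C (1:ℝ)
  | cons r t ih =>
    simp only [Multiset.map_cons, Multiset.prod_cons]
    rw [reverse_mul_of_domain, ih]

lemma newton_aux_reverse (P : Polynomial ℝ) (hP : P ≠ 0)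
    (h : Multiset.card P.roots = P.natDegree) (h0 : P.coeff 0 ≠ 0) :
    P.reverse.natDegree = P.natDegree ∧ Multiset.card P.reverse.roots = P.natDegree := by
  have hnt : P.natTrailingDegree = 0 := natTrailingDegree_eq_zero.mpr (Or.inr h0)
  have hnd : P.reverse.natDegree = P.natDegree := by rw [reverse_natDegree, hnt]; omega
  refine ⟨hnd, ?_⟩
  have hroots0 : ∀ r ∈ P.roots, r ≠ 0 := by
    rintro r hr rfl
    have := isRoot_of_mem_roots hr
    rw [IsRoot, ← coeff_zero_eq_eval_zero] at this
    exact h0 this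
  have hfac := C_leadingCoeff_mul_prod_multiset_X_sub_C h
  have hrev : P.reverse = C P.leadingCoeff *
      ((P.roots.map fun r => ((X : Polynomial ℝ) - C r).reverse)).prod := by
    conv_lhs => rw [← hfac]
    rw [reverse_mul_of_domain, reverse_C, newton_aux_rev_prod]
  have hmapc : (P.roots.map fun r => ((X : Polynomial ℝ) - C r).reverse)
      = P.roots.map fun r => C (-r) * ((X : Polynomial ℝ) - C r⁻¹) :=
    Multiset.map_congr rfl (fun r hr => newton_aux_rev_lin r (hroots0 r hr))
  rw [hmapc, Multiset.prod_map_mul] at hrev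
  have hCprod : (P.roots.map fun r => (C (-r) : Polynomial ℝ)).prod
      = C ((P.roots.map fun r => -r).prod) := by
    rw [map_multiset_prod (C : ℝ →+* Polynomial ℝ), Multiset.map_map]
    rfl
  rw [hCprod, ← mul_assoc, ← C_mul] at hrev
  have hdne : P.leadingCoeff * (P.roots.map fun r => -r).prod ≠ 0 := by
    apply mul_ne_zero (leadingCoeff_ne_zero.mpr hP)
    rw [Ne, Multiset.prod_eq_zero_iff]
    intro hmem
    obtain ⟨r, hr, hr0⟩ := Multiset.mem_map.mp hmem
    exact hroots0 r hr (neg_eq_zero.mp hr0)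
  have : (P.roots.map fun r => ((X : Polynomial ℝ) - C r⁻¹)).prod
      = ((P.roots.map fun r => r⁻¹).map fun s => ((X : Polynomial ℝ) - C s)).prod := by
    rw [Multiset.map_map]; rfl
  rw [hrev, roots_C_mul _ hdne, this, roots_multiset_prod_X_sub_C]
  rw [Multiset.card_map]
  exact h

lemma newton_quad (Q : Polynomial ℝ) (hdeg : Q.natDegree = 2)
    (hroots : Multiset.card Q.roots = 2) :
    4 * (Q.coeff 2 * Q.coeff 0) ≤ Q.coeff 1 ^ 2 := by
  have hex : ∃ x : ℝ, Q.eval x = 0 := by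
    have hne0 : Q.roots ≠ 0 := by
      intro h0; rw [h0] at hroots; simp at hroots
    obtain ⟨x, hx⟩ := Multiset.exists_mem_of_ne_zero hne0
    exact ⟨x, isRoot_of_mem_roots hx⟩
  obtain ⟨x, hx⟩ := hex
  have heval : Q.coeff 0 + Q.coeff 1 * x + Q.coeff 2 * x^2 = 0 := by
    have he := Polynomial.eval_eq_sum_range' (p := Q) (n := 3) (by omega) x
    rw [he] at hx
    simp [Finset.sum_range_succ] at hx
    nlinarith [hx]
  have h2 : Q.coeff 2 * (Q.coeff 0 + Q.coeff 1 * x + Q.coeff 2 * x^2) = 0 := by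
    rw [heval]; ring
  nlinarith [sq_nonneg (2 * Q.coeff 2 * x + Q.coeff 1), h2]

lemma newton_final (A B Cc fK fD K D : ℝ) (hK : 0 ≤ K) (hD : 0 ≤ D)
    (hfK : 0 < fK) (hfD : 0 < fD)
    (h4 : (D+2) * ((D+1) * fD) * (fK * A) * (fD * ((K+2) * ((K+1) * fK) * Cc))
      ≤ ((D+1) * fD * ((K+1) * fK * B)) ^ 2) :
    A * Cc * ((K+2) * (D+2)) ≤ B ^ 2 * ((K+1) * (D+1)) := by
  have hpos : 0 < (K+1) * (D+1) * fK^2 * fD^2 := by positivity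
  nlinarith [h4, hpos]

lemma newton_core (P : Polynomial ℝ) (hP : P ≠ 0)
    (h : Multiset.card P.roots = P.natDegree) (k : ℕ) (hk1 : 1 ≤ k)
    (hk2 : k + 1 ≤ P.natDegree) :
    P.coeff (k-1) * P.coeff (k+1) * (1 + 1/(k:ℝ)) * (1 + 1/((P.natDegree - k : ℕ) : ℝ))
      ≤ P.coeff k ^ 2 := by
  obtain ⟨K, rfl⟩ : ∃ K, k = K + 1 := ⟨k - 1, by omega⟩
  obtain ⟨D, hm⟩ : ∃ D, P.natDegree = K + D + 2 := ⟨P.natDegree - K - 2, by omega⟩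
  set A := P.coeff K with hA
  set B := P.coeff (K+1) with hB
  set Cc := P.coeff (K+2) with hC
  have hsub : P.natDegree - (K+1) = D + 1 := by omega
  rw [hsub]
  simp only [Nat.add_sub_cancel]
  have hf1 : (0:ℝ) < 1 + 1/((K:ℝ)+1) := by positivity
  have hf2 : (0:ℝ) < 1 + 1/((D:ℝ)+1) := by positivity
  push_cast
  by_cases hAC : A * Cc ≤ 0
  · have hle : A * Cc * (1 + 1/((K:ℝ)+1)) * (1 + 1/((D:ℝ)+1)) ≤ 0 :=
      mul_nonpos_of_nonpos_of_nonneg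
        (mul_nonpos_of_nonpos_of_nonneg hAC hf1.le) hf2.le
    exact hle.trans (sq_nonneg B)
  · push_neg at hAC
    have hAne : A ≠ 0 := by rintro h0; rw [h0] at hAC; simp at hAC
    -- step 1 : K-th derivative
    set q := derivative^[K] P with hq
    obtain ⟨hqdeg, hqroots, hqne⟩ := newton_aux_iter P hP h K (by omega)
    have hqdeg' : q.natDegree = D + 2 := by rw [← hq] at hqdeg; omega
    have hqroots' : Multiset.card q.roots = D + 2 := by rw [← hq] at hqroots; omega
    have hq0 : q.coeff 0 = (Nat.factorial K : ℝ) * A := by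
      rw [hq, coeff_iterate_derivative, nsmul_eq_mul]
      simp [Nat.descFactorial_self, hA]
    have hq1 : q.coeff 1 = (Nat.factorial (K+1) : ℝ) * B := by
      rw [hq, coeff_iterate_derivative, nsmul_eq_mul]
      simp only [show 1 + K = K + 1 from by omega]
      rw [newton_df1]
    have hq2 : (2:ℝ) * q.coeff 2 = (Nat.factorial (K+2) : ℝ) * Cc := by
      rw [hq, coeff_iterate_derivative, nsmul_eq_mul]
      simp only [show 2 + K = K + 2 from by omega]
      have h2 : ((Nat.factorial (K+2) : ℕ) : ℝ) = 2 * ((K+2).descFactorial K : ℝ) := by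
        rw [← newton_df2 K]; push_cast; ring
      rw [h2]; ring
    have hq0ne : q.coeff 0 ≠ 0 := by
      rw [hq0]; exact mul_ne_zero (by positivity) hAne
    -- step 2 : reverse
    set R := q.reverse with hR
    obtain ⟨hRdeg, hRroots⟩ := newton_aux_reverse q hqne (by rw [hqdeg', hqroots']) hq0ne
    have hRdeg' : R.natDegree = D + 2 := by rw [← hR] at hRdeg; omega
    have hRroots' : Multiset.card R.roots = D + 2 := by rw [← hR] at hRroots; omega
    have hRcoeff : ∀ i, i ≤ D + 2 → R.coeff i = q.coeff (D + 2 - i) := by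
      intro i hi
      rw [hR, coeff_reverse, hqdeg', revAt_le hi]
    -- step 3 : differentiate D times, quadratic
    set Q := derivative^[D] R with hQ
    have hRne : R ≠ 0 := by
      intro h0; rw [h0, natDegree_zero] at hRdeg'; omega
    obtain ⟨hQdeg, hQroots, hQne⟩ :=
      newton_aux_iter R hRne (by rw [hRdeg', hRroots']) D (by omega)
    have hQdeg' : Q.natDegree = 2 := by rw [← hQ] at hQdeg; omega
    have hQroots' : Multiset.card Q.roots = 2 := by rw [← hQ] at hQroots; omega
    have hQ0 : Q.coeff 0 = ((Nat.factorial D : ℕ) : ℝ) * q.coeff 2 := by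
      rw [hQ, coeff_iterate_derivative, nsmul_eq_mul, zero_add,
        hRcoeff D (by omega), show D + 2 - D = 2 from by omega, Nat.descFactorial_self]
    have hQ1 : Q.coeff 1 = ((Nat.factorial (D+1) : ℕ) : ℝ) * q.coeff 1 := by
      rw [hQ, coeff_iterate_derivative, nsmul_eq_mul,
        hRcoeff (1 + D) (by omega), show D + 2 - (1 + D) = 1 from by omega]
      simp only [show 1 + D = D + 1 from by omega]
      rw [newton_df1]
    have hQ2 : (2:ℝ) * Q.coeff 2 = ((Nat.factorial (D+2) : ℕ) : ℝ) * q.coeff 0 := by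
      rw [hQ, coeff_iterate_derivative, nsmul_eq_mul,
        hRcoeff (2 + D) (by omega), show D + 2 - (2 + D) = 0 from by omega]
      simp only [show 2 + D = D + 2 from by omega]
      have h2 : ((Nat.factorial (D+2) : ℕ) : ℝ) = 2 * ((D+2).descFactorial D : ℝ) := by
        rw [← newton_df2 D]; push_cast; ring
      rw [h2]; ring
    have hdisc := newton_quad Q hQdeg' hQroots'
    clear_value A B Cc q R Q
    -- step 5 : translate back
    have h4 : ((2:ℝ) * Q.coeff 2) * ((2:ℝ) * Q.coeff 0) ≤ Q.coeff 1 ^ 2 := by nlinarith [hdisc]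
    have fK1 : ((Nat.factorial (K+1) : ℕ) : ℝ) = ((K:ℝ)+1) * (Nat.factorial K : ℝ) := by
      push_cast [Nat.factorial_succ]; ring
    have fK2 : ((Nat.factorial (K+2) : ℕ) : ℝ)
        = ((K:ℝ)+2) * (((K:ℝ)+1) * (Nat.factorial K : ℝ)) := by
      rw [show K + 2 = (K+1) + 1 from by omega]
      push_cast [Nat.factorial_succ]; ring
    have fD1 : ((Nat.factorial (D+1) : ℕ) : ℝ) = ((D:ℝ)+1) * (Nat.factorial D : ℝ) := by
      push_cast [Nat.factorial_succ]; ring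
    have fD2 : ((Nat.factorial (D+2) : ℕ) : ℝ)
        = ((D:ℝ)+2) * (((D:ℝ)+1) * (Nat.factorial D : ℝ)) := by
      rw [show D + 2 = (D+1) + 1 from by omega]
      push_cast [Nat.factorial_succ]; ring
    have hQ0' : (2:ℝ) * Q.coeff 0
        = ((Nat.factorial D : ℕ) : ℝ) * (((K:ℝ)+2) * (((K:ℝ)+1) * (Nat.factorial K : ℝ)) * Cc) := by
      rw [hQ0, show (2:ℝ) * (((Nat.factorial D : ℕ) : ℝ) * q.coeff 2)
          = ((Nat.factorial D : ℕ) : ℝ) * ((2:ℝ) * q.coeff 2) from by ring, hq2, fK2]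
    rw [hQ2, fD2, hq0, hQ1, fD1, hq1, fK1, hQ0'] at h4
    -- conclude
    have hgoal : A * Cc * (1 + 1/((K:ℝ)+1)) * (1 + 1/((D:ℝ)+1))
        = (A * Cc * (((K:ℝ)+2) * ((D:ℝ)+2))) / (((K:ℝ)+1) * ((D:ℝ)+1)) := by
      field_simp; ring
    rw [← hA, hgoal, div_le_iff₀ (by positivity)]
    exact newton_final A B Cc _ _ _ _ (Nat.cast_nonneg K) (Nat.cast_nonneg D)
      (by positivity) (by positivity) h4

lemma newton_prod_pos (s : Multiset ℝ) (hs : ∀ r ∈ s, r < 0) :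
    ∀ i, (0 ≤ ((s.map fun r => (X:Polynomial ℝ) - C r).prod).coeff i) ∧
      (i ≤ Multiset.card s → 0 < ((s.map fun r => (X:Polynomial ℝ) - C r).prod).coeff i) := by
  induction s using Multiset.induction with
  | empty =>
    intro i
    rcases i with _ | j <;> simp [coeff_one]
  | cons r t ih =>
    intro i
    have hr : r < 0 := hs r (Multiset.mem_cons_self r t)
    have ih' := ih (fun x hx => hs x (Multiset.mem_cons_of_mem hx))
    set q := (t.map fun r => (X:Polynomial ℝ) - C r).prod with hqdef
    have hc : ((Multiset.map (fun r => (X:Polynomial ℝ) - C r) (r ::ₘ t)).prod)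
        = (X - C r) * q := by
      rw [Multiset.map_cons, Multiset.prod_cons]
    rw [hc, Multiset.card_cons]
    have hexp : ∀ i, ((X - C r) * q).coeff i = (X * q).coeff i - r * q.coeff i := by
      intro i; rw [sub_mul, coeff_sub, coeff_C_mul]
    rcases i with _ | j
    · rw [hexp 0]
      have hX0 : (X * q).coeff 0 = 0 := by
        rw [mul_coeff_zero, coeff_X_zero, zero_mul]
      have h0 := (ih' 0).2 (by omega)
      constructor
      · rw [hX0]; nlinarith
      · intro _; rw [hX0]; nlinarith
    · rw [hexp (j+1), coeff_X_mul]
      have h1 := ih' j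
      have h2 := ih' (j+1)
      constructor
      · nlinarith [h1.1, h2.1]
      · intro hj
        have hj' : j ≤ Multiset.card t := by omega
        nlinarith [h1.2 hj', h2.1]

theorem stmt4 (n : ℕ) (a : ℕ → ℝ)
    (ha_nonneg : ∀ i ≤ n, 0 ≤ a i)
    (hreal : ∀ z : ℂ, Polynomial.aeval z (∑ k ∈ Finset.range (n + 1), C (a k) * X ^ k) = 0 →
      z.im = 0) :
    (∀ k, 1 ≤ k → k ≤ n - 1 →
      a (k - 1) * a (k + 1) * (1 + 1 / (k : ℝ)) * (1 + 1 / ((n - k : ℕ) : ℝ)) ≤ (a k) ^ 2) ∧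
    (∀ k, 1 ≤ k → k ≤ n - 1 → a (k - 1) * a (k + 1) ≤ (a k) ^ 2) ∧
    (∃ m ≤ n, (∀ i, i < m → a i ≤ a (i + 1)) ∧
      (∀ i, m ≤ i → i < n → a (i + 1) ≤ a i)) := by
  set P : Polynomial ℝ := ∑ k ∈ Finset.range (n + 1), C (a k) * X ^ k with hPdef
  have hcoeff : ∀ i, P.coeff i = if i ≤ n then a i else 0 := by
    intro i
    rw [hPdef, finset_sum_coeff]
    simp only [coeff_C_mul, coeff_X_pow, mul_ite, mul_one, mul_zero]
    rw [Finset.sum_ite_eq (Finset.range (n+1)) i a]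
    simp [Nat.lt_succ_iff]
  have hc' : ∀ i, i ≤ n → P.coeff i = a i := by
    intro i hi; rw [hcoeff i, if_pos hi]
  by_cases hP0 : P = 0
  · exfalso
    have := hreal Complex.I (by rw [hP0, map_zero])
    simp at this
  have hdegle : P.natDegree ≤ n := by
    rw [natDegree_le_iff_coeff_eq_zero]
    intro N hN; rw [hcoeff, if_neg (by omega)]
  set m := P.natDegree with hmdef
  have hroots : Multiset.card P.roots = m :=
    newton_aux_card_roots m P rfl hP0 hreal
  have ham : 0 < a m := by
    have h1 : P.coeff m ≠ 0 := by
      rw [← leadingCoeff]; exact leadingCoeff_ne_zero.mpr hP0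
    rw [hc' m hdegle] at h1
    exact lt_of_le_of_ne (ha_nonneg m hdegle) (Ne.symm h1)
  -- Part 1
  have claim1 : ∀ k, 1 ≤ k → k ≤ n - 1 →
      a (k - 1) * a (k + 1) * (1 + 1 / (k : ℝ)) * (1 + 1 / ((n - k : ℕ) : ℝ)) ≤ (a k) ^ 2 := by
    intro k hk1 hk2
    have hn2 : 2 ≤ n := by omega
    have hk1n : k + 1 ≤ n := by omega
    by_cases hkm : k + 1 ≤ m
    · have hcore := newton_core P hP0 hroots k hk1 hkm
      rw [hc' (k-1) (by omega), hc' k (by omega), hc' (k+1) (by omega)] at hcore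
      have hX : 0 ≤ a (k-1) * a (k+1) * (1 + 1/(k:ℝ)) := by
        have := ha_nonneg (k-1) (by omega)
        have := ha_nonneg (k+1) (by omega)
        positivity
      have hnk : (1:ℝ) + 1/((n-k:ℕ):ℝ) ≤ 1 + 1/((m-k:ℕ):ℝ) := by
        apply add_le_add_right
        apply one_div_le_one_div_of_le
        · exact_mod_cast Nat.cast_pos.mpr (by omega : 0 < m - k)
        · exact_mod_cast Nat.cast_le.mpr (by omega : m - k ≤ n - k)
      calc a (k-1) * a (k+1) * (1 + 1/(k:ℝ)) * (1 + 1/((n-k:ℕ):ℝ))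
          ≤ a (k-1) * a (k+1) * (1 + 1/(k:ℝ)) * (1 + 1/((m-k:ℕ):ℝ)) :=
            mul_le_mul_of_nonneg_left hnk hX
        _ ≤ (a k) ^ 2 := hcore
    · have hak1 : a (k+1) = 0 := by
        rw [← hc' (k+1) hk1n]
        exact coeff_eq_zero_of_natDegree_lt (by omega)
      rw [hak1]
      have : a (k-1) * 0 * (1 + 1/(k:ℝ)) * (1 + 1/((n-k:ℕ):ℝ)) = 0 := by ring
      rw [this]
      positivity
  have claim2 : ∀ k, 1 ≤ k → k ≤ n - 1 → a (k - 1) * a (k + 1) ≤ (a k) ^ 2 := by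
    intro k hk1 hk2
    have h := claim1 k hk1 hk2
    have hk1n : k + 1 ≤ n := by omega
    have hx : 0 ≤ a (k-1) * a (k+1) :=
      mul_nonneg (ha_nonneg (k-1) (by omega)) (ha_nonneg (k+1) hk1n)
    have h1 : (1:ℝ) ≤ 1 + 1/(k:ℝ) := by
      have : (0:ℝ) ≤ 1/(k:ℝ) := by positivity
      linarith
    have h2 : (1:ℝ) ≤ 1 + 1/((n-k:ℕ):ℝ) := by
      have : (0:ℝ) ≤ 1/((n-k:ℕ):ℝ) := by positivity
      linarith
    calc a (k-1) * a (k+1) ≤ a (k-1) * a (k+1) * (1 + 1/(k:ℝ)) :=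
          le_mul_of_one_le_right hx h1
      _ ≤ a (k-1) * a (k+1) * (1 + 1/(k:ℝ)) * (1 + 1/((n-k:ℕ):ℝ)) :=
          le_mul_of_one_le_right (mul_nonneg hx (by positivity)) h2
      _ ≤ (a k)^2 := h
  refine ⟨claim1, claim2, ?_⟩
  -- Part 3 : unimodality
  · -- structure: a i = 0 for i < v, a i > 0 for v ≤ i ≤ m, a i = 0 for m < i ≤ n
    classical
    have hfac := C_leadingCoeff_mul_prod_multiset_X_sub_C hroots
    have hneg : ∀ r ∈ P.roots, r ≤ 0 := by
      intro r hr
      by_contra hpos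
      push_neg at hpos
      have hroot : P.eval r = 0 := isRoot_of_mem_roots hr
      have heval : P.eval r = ∑ k ∈ Finset.range (n+1), a k * r ^ k := by
        rw [hPdef]; simp [eval_finset_sum]
      have hgt : 0 < ∑ k ∈ Finset.range (n+1), a k * r ^ k := by
        apply Finset.sum_pos' (fun i hi => by
          have := ha_nonneg i (by simpa [Nat.lt_succ_iff] using hi)
          positivity)
        exact ⟨m, by simp [Nat.lt_succ_iff, hdegle], by positivity⟩
      rw [heval] at hroot; linarith
    set s1 := P.roots.filter (fun r => r < 0) with hs1
    set s0 := P.roots.filter (fun r => ¬ r < 0) with hs0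
    have hsplit : s1 + s0 = P.roots := Multiset.filter_add_not _ _
    set v := Multiset.card s0 with hv
    have hcard1 : Multiset.card s1 = m - v ∧ v ≤ m := by
      have : Multiset.card s1 + Multiset.card s0 = m := by
        rw [← Multiset.card_add, hsplit, hroots]
      omega
    set G := (s1.map fun r => (X:Polynomial ℝ) - C r).prod with hG
    have hs0X : (s0.map fun r => (X:Polynomial ℝ) - C r).prod = X ^ v := by
      have hrep : (s0.map fun r => (X:Polynomial ℝ) - C r) = Multiset.replicate v X := by
        rw [show v = Multiset.card (s0.map fun r => (X:Polynomial ℝ) - C r) from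
          (Multiset.card_map _ _).symm]
        apply Multiset.eq_replicate_of_mem
        intro b hb
        obtain ⟨r, hr, rfl⟩ := Multiset.mem_map.mp hb
        have h1 : ¬ r < 0 := (Multiset.mem_filter.mp hr).2
        have h2 : r ≤ 0 := hneg r (Multiset.mem_of_mem_filter hr)
        have h3 : r = 0 := le_antisymm h2 (not_lt.mp h1)
        rw [h3, map_zero, sub_zero]
      rw [hrep, Multiset.prod_replicate]
    have hPfac : P = (C P.leadingCoeff * G) * X ^ v := by
      conv_lhs => rw [← hfac, ← hsplit]
      rw [Multiset.map_add, Multiset.prod_add, hs0X, hG]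
      ring
    have hlc : P.leadingCoeff = a m := by
      rw [leadingCoeff, hc' m hdegle]
    have hGpos := newton_prod_pos s1 (fun r hr => (Multiset.mem_filter.mp hr).2)
    have hcoeffP : ∀ i, P.coeff i = if v ≤ i then a m * G.coeff (i - v) else 0 := by
      intro i
      rw [hPfac, coeff_mul_X_pow', coeff_C_mul, hlc]
    have hzero_low : ∀ i, i < v → a i = 0 := by
      intro i hi
      rw [← hc' i (by omega), hcoeffP, if_neg (by omega)]
    have hpos_mid : ∀ i, v ≤ i → i ≤ m → 0 < a i := by
      intro i hi1 hi2
      rw [← hc' i (by omega), hcoeffP, if_pos hi1]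
      have := (hGpos (i - v)).2 (by omega)
      positivity
    have hzero_high : ∀ i, m < i → i ≤ n → a i = 0 := by
      intro i hi1 hi2
      rw [← hc' i hi2]
      exact coeff_eq_zero_of_natDegree_lt (by omega)
    -- argmax
    obtain ⟨M, hMmem, hMmax⟩ := Finset.exists_max_image (Finset.range (n+1)) a ⟨0, by simp⟩
    have hMn : M ≤ n := by simpa [Nat.lt_succ_iff] using hMmem
    have hmax : ∀ i, i ≤ n → a i ≤ a M := fun i hi =>
      hMmax i (by simp [Nat.lt_succ_iff, hi])
    have haM : 0 < a M := lt_of_lt_of_le ham (hmax m hdegle)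
    have hMv : v ≤ M := by
      by_contra hlt
      push_neg at hlt
      rw [hzero_low M hlt] at haM; linarith
    have hMm : M ≤ m := by
      by_contra hlt
      push_neg at hlt
      rw [hzero_high M hlt hMn] at haM; linarith
    have stepR : ∀ j, v ≤ j → j + 2 ≤ m → a (j+1) < a j → a (j+2) < a (j+1) := by
      intro j hj1 hj2 hlt
      have hlc := claim2 (j+1) (by omega) (by omega)
      simp only [Nat.add_sub_cancel] at hlc
      rw [show j+1+1 = j+2 from by omega] at hlc
      have h0 : 0 < a j := hpos_mid j hj1 (by omega)
      have h1 : 0 < a (j+1) := hpos_mid (j+1) (by omega) (by omega)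
      have hnn : 0 ≤ a (j+2) := ha_nonneg (j+2) (by omega)
      nlinarith [hlc]
    have stepL : ∀ j, v + 1 ≤ j → j + 1 ≤ m → a j < a (j+1) → a (j-1) < a j := by
      intro j hj1 hj2 hlt
      have hlc := claim2 j (by omega) (by omega)
      have h0 : 0 < a j := hpos_mid j (by omega) (by omega)
      have h2 : 0 < a (j+1) := lt_trans h0 hlt
      nlinarith [hlc]
    refine ⟨M, by omega, ?_, ?_⟩
    · -- increasing below M
      intro i hiM
      by_contra hlt
      push_neg at hlt
      have hvi : v ≤ i := by
        by_contra hva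
        push_neg at hva
        have h1 := hzero_low i hva
        have h2 : 0 ≤ a (i+1) := ha_nonneg (i+1) (by omega)
        rw [h1] at hlt
        linarith
      have S : ∀ d, i+1+d ≤ M → a (i+1+d) < a (i+d) ∧ a (i+1+d) < a i := by
        intro d
        induction d with
        | zero => intro _; constructor <;> simpa using hlt
        | succ d ih =>
          intro hd
          obtain ⟨h1, h2⟩ := ih (by omega)
          rw [show i+1+d = i+d+1 from by omega] at h1
          have hst := stepR (i+d) (by omega) (by omega) h1
          rw [show i+1+(d+1) = i+d+2 from by omega, show i+(d+1) = i+d+1 from by omega]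
          rw [show i+1+d = i+d+1 from by omega] at h2
          exact ⟨hst, lt_trans hst h2⟩
      have hfin := S (M - (i+1)) (by omega)
      rw [show i+1+(M-(i+1)) = M from by omega] at hfin
      have hcon := hmax i (by omega)
      linarith [hfin.2]
    · -- decreasing above M
      intro i hMi hin
      by_contra hlt
      push_neg at hlt
      have him : i + 1 ≤ m := by
        by_contra hbig
        push_neg at hbig
        have h0 := hzero_high (i+1) (by omega) (by omega)
        have h1 := ha_nonneg i (by omega)
        rw [h0] at hlt
        linarith
      have T : ∀ d, d ≤ i - M → a (i-d) < a (i-d+1) := by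
        intro d
        induction d with
        | zero => intro _; simpa using hlt
        | succ d ih =>
          intro hd
          have h1 := ih (by omega)
          have hst := stepL (i-d) (by omega) (by omega) h1
          rw [show i-d-1 = i-(d+1) from by omega] at hst
          rw [show i-d = i-(d+1)+1 from by omega] at hst
          exact hst
      have hfin := T (i - M) (le_refl _)
      rw [show i-(i-M) = M from by omega] at hfin
      have hcon := hmax (M+1) (by omega)
      linarith
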